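/- (Reflection identities.) Let u_1,…,u_n be pairwise distinct reals in (0,1), let T be the binary search tree built by successively inserting u_1,…,u_n, and let T* be the binary search tree built by successively inserting 1−u_1,…,1−u_n. Then 𝐩(T) + 𝐩(T*) = p(T) + n and 𝐰(T) + 𝐰(T*) = w(T) + n(n+1)/2. -/
import Mathlib


open Finset Filter Topology MeasureTheory

/-- finite rooted binary trees with real labels. -/
inductive BTree where
  | leaf : BTree
  | node : BTree → ℝ → BTree → BTree

namespace BTree

/-- number of nodes. -/
def size : BTree → ℕ
  | leaf => 0
  | node l _ r => size l + size r + 1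

/-- the positions (root-to-node direction words, `false` = left) of all nodes. -/
def positions : BTree → List (List Bool)
  | leaf => []
  | node l _ r => [] :: ((positions l).map (false :: ·) ++ (positions r).map (true :: ·))

/-- the label at a given position (junk value `0` outside of the tree). -/
noncomputable def labelAt : BTree → List Bool → ℝ
  | leaf, _ => 0
  | node _ x _, [] => x
  | node l _ _, false :: p => labelAt l p
  | node _ _ r, true :: p => labelAt r p

/-- weighted depth of the node at position `p`: the sum of all labels on the path
from the root to the node, endpoints included. -/
noncomputable def wdepth (t : BTree) (p : List Bool) : ℝ :=
  ∑ i ∈ Finset.range (p.length + 1), labelAt t (p.take i)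

/-- weighted path length `𝐩(T)`: the sum of the weighted depths of all nodes. -/
noncomputable def wpl (t : BTree) : ℝ := ((positions t).map (wdepth t)).sum

/-- longest common prefix of two positions (the position of the lowest common ancestor). -/
def commonPrefix : List Bool → List Bool → List Bool
  | a :: p, b :: q => if a = b then a :: commonPrefix p q else []
  | _, _ => []

/-- weighted distance between the nodes at positions `p` and `q`: the sum of all
labels on the path connecting them, endpoints included (for `p = q` it is the label at `p`). -/
noncomputable def wdist (t : BTree) (p q : List Bool) : ℝ :=
  wdepth t p + wdepth t q - 2 * wdepth t (commonPrefix p q) + labelAt t (commonPrefix p q)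

/-- weighted Wiener index `𝐰(T)`: the sum of the weighted distances over all unordered
pairs of nodes, pairs of a node with itself included. -/
noncomputable def wWiener (t : BTree) : ℝ :=
  (((positions t).map fun p => ((positions t).map fun q => wdist t p q).sum).sum
    + ((positions t).map fun p => wdist t p p).sum) / 2

/-- (unweighted) path length `p(T)`: the sum of the depths of all nodes. -/
noncomputable def pl (t : BTree) : ℝ := ((positions t).map fun p => (p.length : ℝ)).sum

/-- graph distance between the nodes at positions `p` and `q`. -/
noncomputable def gdist (p q : List Bool) : ℝ :=
  (p.length : ℝ) + (q.length : ℝ) - 2 * ((commonPrefix p q).length : ℝ)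

/-- (unweighted) Wiener index `w(T)`: the sum of the graph distances over all unordered
pairs of distinct nodes. -/
noncomputable def wiener (t : BTree) : ℝ :=
  (((positions t).map fun p => ((positions t).map fun q => gdist p q).sum).sum) / 2

/-- binary search tree insertion: go left at a node whose label is at least the key,
right otherwise. -/
noncomputable def insertBST : BTree → ℝ → BTree
  | leaf, y => node leaf y leaf
  | node l x r, y => if y ≤ x then node (insertBST l y) x r else node l x (insertBST r y)

/-- the binary search tree built by successively inserting the elements of a list. -/
noncomputable def bstOfList (l : List ℝ) : BTree := l.foldl insertBST leaf

/-- the subtree rooted at a given position. -/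
def subtreeAt : BTree → List Bool → BTree
  | t, [] => t
  | leaf, _ :: _ => leaf
  | node l _ _, false :: p => subtreeAt l p
  | node _ _ r, true :: p => subtreeAt r p

/-- height of a tree: the maximal depth of its nodes (measured from its root). -/
def heightT (t : BTree) : ℕ := ((positions t).map List.length).foldr max 0

/-- the list of all labels of a tree. -/
noncomputable def labels : BTree → List ℝ
  | leaf => []
  | node l x r => x :: (labels l ++ labels r)

/-- the largest label occurring in a tree (junk value `0` for the empty tree). -/
noncomputable def maxLabel (t : BTree) : ℝ := (labels t).foldr max 0

/-- the positions of the external nodes, in left-to-right (depth first search) order. -/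
def extList : BTree → List (List Bool)
  | leaf => [[]]
  | node l _ r => (extList l).map (false :: ·) ++ (extList r).map (true :: ·)

/-- weighted depth of an external node at position `p`: the sum of the labels of the
internal nodes on the path from the root to it. -/
noncomputable def wdepthExt (t : BTree) (p : List Bool) : ℝ :=
  ∑ i ∈ Finset.range p.length, labelAt t (p.take i)

end BTree


namespace BTree

/-- mirror of a tree: swap children and replace each label `x` by `1 - x`. -/
def mirror : BTree → BTree
  | leaf => leaf
  | node l x r => node (mirror r) (1 - x) (mirror l)

lemma mem_labels_insert {x y : ℝ} {t : BTree} (h : x ∈ labels (insertBST t y)) :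
    x = y ∨ x ∈ labels t := by
  induction t with
  | leaf => simp [insertBST, labels] at h; tauto
  | node l a r ihl ihr =>
    by_cases hya : y ≤ a <;> simp [insertBST, hya, labels] at h ⊢ <;> tauto

lemma insert_mirror {y : ℝ} {t : BTree} (h : y ∉ labels t) :
    insertBST (mirror t) (1 - y) = mirror (insertBST t y) := by
  induction t with
  | leaf => simp [insertBST, mirror]
  | node l a r ihl ihr =>
    simp [labels] at h
    obtain ⟨hya, hl, hr⟩ := h
    by_cases hle : y ≤ a
    · have h1 : ¬ (1 - y ≤ 1 - a) := by
        intro hc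
        exact hya (le_antisymm hle (by linarith))
      simp [insertBST, mirror, hle, h1, ihl hl]
    · have h1 : (1 - y ≤ 1 - a) := by linarith [lt_of_not_ge hle]
      simp [insertBST, mirror, hle, h1, ihr hr]

lemma foldl_mirror : ∀ (l : List ℝ) (t : BTree), l.Nodup → (∀ x ∈ l, x ∉ labels t) →
    List.foldl insertBST (mirror t) (l.map fun y => 1 - y) =
      mirror (List.foldl insertBST t l)
  | [], t, _, _ => rfl
  | y :: l, t, hnd, hmem => by
    simp only [List.map_cons, List.foldl_cons]
    rw [insert_mirror (hmem y (by simp))]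
    refine foldl_mirror l (insertBST t y) hnd.of_cons ?_
    intro x hx hc
    rcases mem_labels_insert hc with h | h
    · exact (List.nodup_cons.1 hnd).1 (h ▸ hx)
    · exact hmem x (List.mem_cons_of_mem _ hx) h

lemma bst_mirror {u : List ℝ} (hnd : u.Nodup) :
    bstOfList (u.map fun y => 1 - y) = mirror (bstOfList u) := by
  have := foldl_mirror u leaf hnd (by simp [labels])
  simpa [bstOfList, mirror] using this

lemma positions_mirror (t : BTree) :
    (positions (mirror t)).Perm ((positions t).map (List.map not)) := by
  induction t with
  | leaf => simp [mirror, positions]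
  | node l a r ihl ihr =>
    simp only [mirror, positions, List.map_cons, List.map_nil, List.map_append,
      List.map_map]
    refine List.Perm.cons _ ?_
    have e1 : (List.map not ∘ (false :: ·)) =
        (fun p : List Bool => true :: p.map not) := by
      funext p; simp
    have e2 : (List.map not ∘ (true :: ·)) =
        (fun p : List Bool => false :: p.map not) := by
      funext p; simp
    rw [e1, e2]
    refine List.Perm.trans (List.Perm.append ((ihr.map _)) ((ihl.map _))) ?_
    rw [List.map_map, List.map_map]
    have e3 : (((false :: ·) ∘ List.map not) : List Bool → List Bool) =
        fun p => false :: p.map not := rfl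
    have e4 : (((true :: ·) ∘ List.map not) : List Bool → List Bool) =
        fun p => true :: p.map not := rfl
    rw [e3, e4]
    exact List.perm_append_comm

lemma labelAt_mirror {t : BTree} : ∀ p ∈ positions t,
    labelAt (mirror t) (p.map not) = 1 - labelAt t p := by
  induction t with
  | leaf => simp [positions]
  | node l a r ihl ihr =>
    intro p hp
    simp only [positions, List.mem_cons, List.mem_append, List.mem_map] at hp
    rcases hp with rfl | ⟨q, hq, rfl⟩ | ⟨q, hq, rfl⟩
    · simp [mirror, labelAt]
    · simpa [mirror, labelAt] using ihl q hq
    · simpa [mirror, labelAt] using ihr q hq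

lemma prefix_closed {t : BTree} : ∀ p ∈ positions t, ∀ q, q <+: p → q ∈ positions t := by
  induction t with
  | leaf => simp [positions]
  | node l a r ihl ihr =>
    intro p hp q hq
    simp only [positions, List.mem_cons, List.mem_append, List.mem_map] at hp ⊢
    rcases hp with rfl | ⟨p', hp', rfl⟩ | ⟨p', hp', rfl⟩
    · left; exact List.prefix_nil.1 hq
    · rcases q with _ | ⟨b, q'⟩
      · left; rfl
      · obtain ⟨rfl, hq'⟩ := List.cons_prefix_cons.1 hq
        right; left; exact ⟨q', ihl p' hp' q' hq', rfl⟩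
    · rcases q with _ | ⟨b, q'⟩
      · left; rfl
      · obtain ⟨rfl, hq'⟩ := List.cons_prefix_cons.1 hq
        right; right; exact ⟨q', ihr p' hp' q' hq', rfl⟩

lemma commonPrefix_prefix_left : ∀ p q : List Bool, commonPrefix p q <+: p
  | [], _ => by simp [commonPrefix]
  | _ :: _, [] => by simp [commonPrefix]
  | a :: p, b :: q => by
    by_cases h : a = b
    · simpa [commonPrefix, h] using (commonPrefix_prefix_left p q)
    · simp [commonPrefix, h]

lemma commonPrefix_self : ∀ p : List Bool, commonPrefix p p = p
  | [] => by simp [commonPrefix]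
  | a :: p => by simp [commonPrefix, commonPrefix_self p]

lemma commonPrefix_map_not : ∀ p q : List Bool,
    commonPrefix (p.map not) (q.map not) = (commonPrefix p q).map not
  | [], _ => by simp [commonPrefix]
  | _ :: _, [] => by simp [commonPrefix]
  | a :: p, b :: q => by
    by_cases h : a = b
    · simp [commonPrefix, h, commonPrefix_map_not p q]
    · have : ¬ (!a = !b) := by simpa using h
      simp [commonPrefix, h, this]

lemma length_positions (t : BTree) : (positions t).length = size t := by
  induction t with
  | leaf => simp [positions, size]
  | node l a r ihl ihr => simp [positions, size, ihl, ihr]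

lemma size_insert (t : BTree) (y : ℝ) : size (insertBST t y) = size t + 1 := by
  induction t with
  | leaf => simp [insertBST, size]
  | node l a r ihl ihr =>
    by_cases h : y ≤ a <;> simp [insertBST, h, size, ihl, ihr] <;> omega

lemma size_foldl : ∀ (l : List ℝ) (t : BTree),
    size (List.foldl insertBST t l) = size t + l.length
  | [], t => by simp
  | y :: l, t => by simp [size_foldl l, size_insert]; omega

lemma size_bstOfList (u : List ℝ) : size (bstOfList u) = u.length := by
  simp [bstOfList, size_foldl, size]

lemma wdepth_mirror {t : BTree} {p : List Bool} (hp : p ∈ positions t) :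
    wdepth (mirror t) (p.map not) = (p.length + 1 : ℝ) - wdepth t p := by
  unfold wdepth
  rw [List.length_map]
  have key : ∀ i ∈ Finset.range (p.length + 1),
      labelAt (mirror t) ((p.map not).take i) = 1 - labelAt t (p.take i) := by
    intro i _
    rw [← List.map_take]
    exact labelAt_mirror _ (prefix_closed p hp _ (List.take_prefix i p))
  rw [Finset.sum_congr rfl key, Finset.sum_sub_distrib]
  simp [mul_comm]

lemma sum_map_add {α : Type*} (P : List α) (f g : α → ℝ) :
    (P.map fun p => f p + g p).sum = (P.map f).sum + (P.map g).sum := by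
  induction P with
  | nil => simp
  | cons a P ih => simp only [List.map_cons, List.sum_cons, ih]; ring

lemma sum_map_sub {α : Type*} (P : List α) (f g : α → ℝ) :
    (P.map fun p => f p - g p).sum = (P.map f).sum - (P.map g).sum := by
  induction P with
  | nil => simp
  | cons a P ih => simp only [List.map_cons, List.sum_cons, ih]; ring

lemma sum_map_const {α : Type*} (P : List α) (c : ℝ) :
    (P.map fun _ => c).sum = P.length * c := by
  induction P with
  | nil => simp
  | cons a P ih => simp only [List.map_cons, List.sum_cons, ih, List.length_cons]
                   push_cast; ring

lemma gdist_self (p : List Bool) : gdist p p = 0 := by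
  unfold gdist; rw [commonPrefix_self]; ring

lemma wdist_mirror {t : BTree} {p q : List Bool} (hp : p ∈ positions t)
    (hq : q ∈ positions t) :
    wdist (mirror t) (p.map not) (q.map not) = gdist p q + 1 - wdist t p q := by
  have hc : commonPrefix p q ∈ positions t :=
    prefix_closed p hp _ (commonPrefix_prefix_left p q)
  unfold wdist gdist
  rw [commonPrefix_map_not, wdepth_mirror hp, wdepth_mirror hq, wdepth_mirror hc,
    labelAt_mirror _ hc]
  ring

end BTree

open BTree in
/-- reflection identities.  Let `u_1,…,u_n` be pairwise distinct reals
in `(0,1)`, `T` the binary search tree built by successively inserting `u_1,…,u_n` and `T*`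
the one built from `1−u_1,…,1−u_n`.  Then `𝐩(T) + 𝐩(T*) = p(T) + n` and
`𝐰(T) + 𝐰(T*) = w(T) + n(n+1)/2`. -/
theorem reflection_identities (n : ℕ) (u : List ℝ) (hlen : u.length = n)
    (hnodup : u.Nodup) (hmem : ∀ x ∈ u, x ∈ Set.Ioo (0 : ℝ) 1) :
    wpl (bstOfList u) + wpl (bstOfList (u.map fun y => 1 - y)) = pl (bstOfList u) + n ∧
    wWiener (bstOfList u) + wWiener (bstOfList (u.map fun y => 1 - y))
      = wiener (bstOfList u) + (n : ℝ) * ((n : ℝ) + 1) / 2 := by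
  have hmir : bstOfList (u.map fun y => 1 - y) = mirror (bstOfList u) := bst_mirror hnodup
  set T := bstOfList u with hT
  rw [hmir]
  have hperm := positions_mirror T
  set P := positions T with hP
  have hNn : (P.length : ℝ) = (n : ℝ) := by
    rw [hP, length_positions, hT, size_bstOfList, hlen]
  have hconst1 : (P.map fun _ : List Bool => (1 : ℝ)).sum = (n : ℝ) := by
    rw [sum_map_const, hNn]; ring
  constructor
  · unfold wpl pl
    rw [← hP]
    have h1 : ((positions (mirror T)).map (wdepth (mirror T))).sum
        = (P.map fun p => ((p.length : ℝ) + 1) - wdepth T p).sum := by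
      rw [(hperm.map (wdepth (mirror T))).sum_eq, List.map_map]
      refine congrArg List.sum (List.map_congr_left ?_)
      intro p hp
      simpa using wdepth_mirror hp
    rw [h1, sum_map_sub (f := fun p : List Bool => (p.length : ℝ) + 1) (g := wdepth T),
      sum_map_add (f := fun p : List Bool => (p.length : ℝ)) (g := fun _ => (1 : ℝ)),
      hconst1]
    ring
  · unfold wWiener wiener
    rw [← hP]
    have hinner : ∀ p ∈ P, ((positions (mirror T)).map (wdist (mirror T) (p.map not))).sum
        = (P.map fun q => gdist p q + 1 - wdist T p q).sum := by
      intro p hp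
      rw [(hperm.map _).sum_eq, List.map_map]
      refine congrArg List.sum (List.map_congr_left ?_)
      intro q hq
      simpa using wdist_mirror hp hq
    have hB : ((positions (mirror T)).map fun p =>
          ((positions (mirror T)).map fun q => wdist (mirror T) p q).sum).sum
        = (P.map fun p => (P.map fun q => gdist p q + 1 - wdist T p q).sum).sum := by
      rw [(hperm.map _).sum_eq, List.map_map]
      refine congrArg List.sum (List.map_congr_left ?_)
      intro p hp
      simpa using hinner p hp
    have hC : ((positions (mirror T)).map fun p => wdist (mirror T) p p).sum
        = (P.map fun p => gdist p p + 1 - wdist T p p).sum := by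
      rw [(hperm.map _).sum_eq, List.map_map]
      refine congrArg List.sum (List.map_congr_left ?_)
      intro p hp
      simpa using wdist_mirror hp hp
    have hsplit : (P.map fun p => (P.map fun q => gdist p q + 1 - wdist T p q).sum).sum
        = (P.map fun p => (P.map fun q => gdist p q).sum).sum + (n : ℝ) * (n : ℝ)
          - (P.map fun p => (P.map fun q => wdist T p q).sum).sum := by
      have e : ∀ p ∈ P, (P.map fun q => gdist p q + 1 - wdist T p q).sum
          = ((P.map fun q => gdist p q).sum + (n : ℝ)) - (P.map fun q => wdist T p q).sum := by
        intro p _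
        rw [sum_map_sub (f := fun q => gdist p q + 1),
          sum_map_add (f := fun q => gdist p q) (g := fun _ => (1 : ℝ)), hconst1]
      rw [List.map_congr_left e, sum_map_sub
        (f := fun p => (P.map fun q => gdist p q).sum + (n : ℝ))
        (g := fun p => (P.map fun q => wdist T p q).sum),
        sum_map_add (f := fun p => (P.map fun q => gdist p q).sum) (g := fun _ => (n : ℝ)),
        sum_map_const, hNn]
    have hdiag : (P.map fun p => gdist p p + 1 - wdist T p p).sum
        = (n : ℝ) - (P.map fun p => wdist T p p).sum := by
      have e : ∀ p ∈ P, gdist p p + 1 - wdist T p p = 1 - wdist T p p := by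
        intro p _; rw [gdist_self]; ring
      rw [List.map_congr_left e, sum_map_sub (f := fun _ => (1 : ℝ)), hconst1]
    rw [hB, hC, hsplit, hdiag]
    ring
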